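/- Let k be an algebraically closed field of characteristic different from 2 and let K be the field of rational functions k(u,v) in two variables over k (the fraction field of the polynomial ring k[u,v]). Set f := u² + v² + 1 − 2(uv + u + v) ∈ K. Then each of the ternary diagonal quadratic forms ⟨u, v, f⟩, ⟨v, uv, f⟩, ⟨u, uv, f⟩ and ⟨u, v, uv⟩ over K is a subform of the 2-fold Pfister form ⟨1, u, v, uv⟩; that is, for each of these ternary diagonal forms q there exists an element w ∈ K such that the quaternary diagonal form obtained from q by appending the entry w is equivalent (isometric) over K to the diagonal form ⟨1, u, v, uv⟩. -/

import Mathlib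

open MvPolynomial

section AuxLemmas

variable {K : Type*} [Field K]

/-- Permutation equivalence of weighted sums of squares in four variables. -/
theorem perm_equiv_aux {w w' : Fin 4 → K} (e : Fin 4 ≃ Fin 4) (h : ∀ i, w' i = w (e i)) :
    QuadraticMap.Equivalent (QuadraticMap.weightedSumSquares K w')
      (QuadraticMap.weightedSumSquares K w) := by
  refine ⟨⟨LinearEquiv.funCongrLeft K K e.symm, fun x => ?_⟩⟩
  simp only [QuadraticMap.weightedSumSquares_apply, LinearEquiv.funCongrLeft_apply,
    LinearMap.funLeft_apply]
  exact (Fintype.sum_equiv e _ _ fun i => by simp [h]).symm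

/-- If `d = a² + c·b²` is nonzero, then `⟨p, q, d, dc⟩ ≃ ⟨1, p, q, c⟩`. -/
theorem repr_equiv_aux (p q a b c d : K) (hd : a ^ 2 + c * b ^ 2 = d) (hd0 : d ≠ 0) :
    QuadraticMap.Equivalent (QuadraticMap.weightedSumSquares K ![p, q, d, d * c])
      (QuadraticMap.weightedSumSquares K ![1, p, q, c]) := by
  refine ⟨{ toFun := fun y => ![a * y 2 - c * b * y 3, y 0, y 1, b * y 2 + a * y 3],
            invFun := fun x => ![x 1, x 2, (a * x 0 + c * b * x 3) / d,
              (-(b * x 0) + a * x 3) / d],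
            map_add' := ?_, map_smul' := ?_, left_inv := ?_, right_inv := ?_,
            map_app' := ?_ }⟩
  · intro x y
    funext i
    fin_cases i <;> simp <;> ring
  · intro r x
    funext i
    fin_cases i <;> simp <;> ring
  · intro y
    have hy : y = ![y 0, y 1, y 2, y 3] := funext fun i => by fin_cases i <;> rfl
    conv_rhs => rw [hy]
    funext i
    fin_cases i
    · simp
    · simp
    · simp only [Matrix.cons_val_zero, Matrix.cons_val_one, Matrix.head_cons,
        Matrix.cons_val_two, Matrix.cons_val_three, Matrix.vecHead, Matrix.vecTail,
        Function.comp_apply, Fin.isValue]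
      simp [Fin.succ_zero_eq_one, Fin.succ_one_eq_two]
      field_simp
      linear_combination (y 2) * hd
    · simp only [Matrix.cons_val_zero, Matrix.cons_val_one, Matrix.head_cons,
        Matrix.cons_val_two, Matrix.cons_val_three, Matrix.vecHead, Matrix.vecTail,
        Function.comp_apply, Fin.isValue]
      simp [Fin.succ_zero_eq_one, Fin.succ_one_eq_two]
      field_simp
      linear_combination (y 3) * hd
  · intro x
    have hx : x = ![x 0, x 1, x 2, x 3] := funext fun i => by fin_cases i <;> rfl
    conv_rhs => rw [hx]
    funext i
    fin_cases i
    · simp only [Matrix.cons_val_zero, Matrix.cons_val_one, Matrix.head_cons,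
        Matrix.cons_val_two, Matrix.cons_val_three, Matrix.vecHead, Matrix.vecTail,
        Function.comp_apply, Fin.isValue]
      simp [Fin.succ_zero_eq_one, Fin.succ_one_eq_two]
      field_simp
      linear_combination (x 0) * hd
    · simp
    · simp
    · simp only [Matrix.cons_val_zero, Matrix.cons_val_one, Matrix.head_cons,
        Matrix.cons_val_two, Matrix.cons_val_three, Matrix.vecHead, Matrix.vecTail,
        Function.comp_apply, Fin.isValue]
      simp [Fin.succ_zero_eq_one, Fin.succ_one_eq_two]
      field_simp
      linear_combination (x 3) * hd
  · intro y
    simp only [QuadraticMap.weightedSumSquares_apply, Fin.sum_univ_four, smul_eq_mul,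
      Matrix.cons_val_zero, Matrix.cons_val_one, Matrix.head_cons, Matrix.cons_val_two,
      Matrix.cons_val_three, Matrix.cons_val_succ, Matrix.vecHead, Matrix.vecTail,
      Function.comp_apply, Fin.isValue, LinearMap.coe_mk, AddHom.coe_mk]
    linear_combination (y 2 * y 2 + c * y 3 * y 3) * hd

end AuxLemmas

set_option maxHeartbeats 2000000 in
/-- Let `k` be an algebraically closed field of characteristic different from
`2` and let `K = k(u,v)` be the field of rational functions in two variables over `k` (the
fraction field of the polynomial ring `k[u,v]`).  Set `f := u² + v² + 1 − 2(uv + u + v) ∈ K`.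
Then each of the ternary diagonal quadratic forms `⟨u, v, f⟩`, `⟨v, uv, f⟩`, `⟨u, uv, f⟩` and
`⟨u, v, uv⟩` over `K` is a subform of the 2-fold Pfister form `⟨1, u, v, uv⟩`; that is, for
each of these ternary diagonal forms `q` there exists `w ∈ K` such that the quaternary
diagonal form obtained from `q` by appending the entry `w` is equivalent (isometric) over
`K` to the diagonal form `⟨1, u, v, uv⟩`. -/
theorem stmt_0 (k : Type*) [Field k] [IsAlgClosed k] (hchar : ringChar k ≠ 2) :
    let K := FractionRing (MvPolynomial (Fin 2) k)
    let u : K := algebraMap (MvPolynomial (Fin 2) k) K (X 0)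
    let v : K := algebraMap (MvPolynomial (Fin 2) k) K (X 1)
    let f : K := u ^ 2 + v ^ 2 + 1 - 2 * (u * v + u + v)
    (∃ w : K, QuadraticMap.Equivalent
        (QuadraticMap.weightedSumSquares K ![u, v, f, w])
        (QuadraticMap.weightedSumSquares K ![1, u, v, u * v])) ∧
    (∃ w : K, QuadraticMap.Equivalent
        (QuadraticMap.weightedSumSquares K ![v, u * v, f, w])
        (QuadraticMap.weightedSumSquares K ![1, u, v, u * v])) ∧
    (∃ w : K, QuadraticMap.Equivalent
        (QuadraticMap.weightedSumSquares K ![u, u * v, f, w])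
        (QuadraticMap.weightedSumSquares K ![1, u, v, u * v])) ∧
    (∃ w : K, QuadraticMap.Equivalent
        (QuadraticMap.weightedSumSquares K ![u, v, u * v, w])
        (QuadraticMap.weightedSumSquares K ![1, u, v, u * v])) := by
  intro K u v f
  have hf_eq : f = u ^ 2 + v ^ 2 + 1 - 2 * (u * v + u + v) := rfl
  -- a square root of -1 in K
  obtain ⟨i, hi⟩ : ∃ i : K, i ^ 2 = -1 := by
    obtain ⟨i0, hi0⟩ := IsAlgClosed.exists_pow_nat_eq (-1 : k) zero_lt_two
    exact ⟨algebraMap (MvPolynomial (Fin 2) k) K (C i0),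
      by rw [← map_pow, ← map_pow, hi0, map_neg, map_neg, map_one, map_one]⟩
  -- f is nonzero
  have hP : (X 0 ^ 2 + X 1 ^ 2 + 1 - 2 * (X 0 * X 1 + X 0 + X 1) : MvPolynomial (Fin 2) k)
      ≠ 0 := by
    intro h
    have h1 := congrArg (eval fun _ => (0 : k)) h
    simp at h1
  have hfeq2 : f = algebraMap (MvPolynomial (Fin 2) k) K
      (X 0 ^ 2 + X 1 ^ 2 + 1 - 2 * (X 0 * X 1 + X 0 + X 1)) := by
    rw [hf_eq]
    simp only [map_add, map_sub, map_mul, map_pow, map_one, map_ofNat]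
    rfl
  have hf0 : f ≠ 0 := by
    rw [hfeq2]
    exact fun h => hP ((map_eq_zero_iff _
      (IsFractionRing.injective (MvPolynomial (Fin 2) k) K)).mp h)
  -- the three representations of f
  have hd1 : (u + v - 1) ^ 2 + (u * v) * (2 * i) ^ 2 = f := by
    rw [hf_eq]; linear_combination (4 * u * v) * hi
  have hd2 : (u - v + 1) ^ 2 + u * (2 * i) ^ 2 = f := by
    rw [hf_eq]; linear_combination (4 * u) * hi
  have hd3 : (u - v - 1) ^ 2 + v * (2 * i) ^ 2 = f := by
    rw [hf_eq]; linear_combination (4 * v) * hi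
  refine ⟨⟨f * (u * v), repr_equiv_aux u v (u + v - 1) (2 * i) (u * v) f hd1 hf0⟩,
    ⟨f * u, (repr_equiv_aux v (u * v) (u - v + 1) (2 * i) u f hd2 hf0).trans
      (perm_equiv_aux ⟨![0, 2, 3, 1], ![0, 3, 1, 2], by decide, by decide⟩
        (fun i => by fin_cases i <;> rfl))⟩,
    ⟨f * v, (repr_equiv_aux u (u * v) (u - v - 1) (2 * i) v f hd3 hf0).trans
      (perm_equiv_aux ⟨![0, 1, 3, 2], ![0, 1, 3, 2], by decide, by decide⟩
        (fun i => by fin_cases i <;> rfl))⟩,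
    ⟨1, perm_equiv_aux ⟨![1, 2, 3, 0], ![3, 0, 1, 2], by decide, by decide⟩
        (fun i => by fin_cases i <;> rfl)⟩⟩
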